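/- Let G be a finite simple graph, n ≥ 1 a natural number, and i ≥ 0. Then the number C^i_G(n) of n-colorings of G with exactly i improper edges satisfies C^i_G(n) = (−1)^i · Σ_{j ≥ 0} (n − 1)^j · χ^{i,j}(G), where χ^{i,j}(G) := Σ_{S ⊆ E(G)} (−1)^{|S|} · C(|S|, i) · C(c(S), j). That is, each impropriety polynomial of G is expressed in terms of the graded Euler characteristics of the dichromatic homology of G. -/

import Mathlib

/-- The number of connected components of the spanning subgraph `(V, S)`. -/
noncomputable def comps (V : Type) [Fintype V] (S : Finset (Sym2 V)) : ℕ :=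
  Nat.card (SimpleGraph.fromEdgeSet (↑S : Set (Sym2 V))).ConnectedComponent

/-- `m(σ)`: the number of edges of `G` whose two endpoints receive the same color
under the coloring `σ` (the improper edges of `σ`). -/
def improperEdges {V : Type} [Fintype V] [DecidableEq V] (G : SimpleGraph V)
    [DecidableRel G.Adj] {n : ℕ} (σ : V → Fin n) : ℕ :=
  (G.edgeFinset.filter fun e => (Sym2.map σ e).IsDiag).card

/-- `C^i_G(n)`: the number of `n`-colorings of `G` with exactly `i` improper edges. -/
def improprietyCount {V : Type} [Fintype V] [DecidableEq V] (G : SimpleGraph V)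
    [DecidableRel G.Adj] (n i : ℕ) : ℕ :=
  (Finset.univ.filter fun σ : V → Fin n => improperEdges G σ = i).card

lemma comps_le_card (V : Type) [Fintype V] (S : Finset (Sym2 V)) :
    comps V S ≤ Fintype.card V := by
  rw [comps, ← Nat.card_eq_fintype_card]
  exact Nat.card_le_card_of_surjective
    (SimpleGraph.fromEdgeSet (↑S : Set (Sym2 V))).connectedComponentMk
    (fun c => c.exists_rep)

lemma binom_sum_choose (x : ℤ) (c N : ℕ) (h : c ≤ N) :
    ∑ j ∈ Finset.range (N+1), x^j * (c.choose j : ℤ) = (x+1)^c := by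
  rw [add_pow]
  simp only [one_pow, mul_one]
  symm
  apply Finset.sum_subset (Finset.range_subset_range.mpr (by omega))
  intro j _ hj
  rw [Finset.mem_range, not_lt] at hj
  rw [Nat.choose_eq_zero_of_lt (by omega)]
  simp

lemma alt_sum_choose (m0 i : ℕ) :
    ∑ m ∈ Finset.range (m0+1), ((-1:ℤ)^m * (m0.choose m : ℤ) * (m.choose i : ℤ)) =
      if m0 = i then (-1)^i else 0 := by
  rcases lt_or_ge m0 i with h | h
  · rw [if_neg (by omega)]
    apply Finset.sum_eq_zero
    intro m hm
    simp only [Finset.mem_range] at hm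
    rw [Nat.choose_eq_zero_of_lt (show m < i by omega)]
    push_cast; ring
  · have h1 : ∀ m ∈ Finset.range i, ((-1:ℤ)^m * (m0.choose m : ℤ) * (m.choose i : ℤ)) = 0 := by
      intro m hm
      simp only [Finset.mem_range] at hm
      rw [Nat.choose_eq_zero_of_lt hm]; push_cast; ring
    rw [Finset.range_eq_Ico, ← Finset.sum_Ico_consecutive _ (Nat.zero_le i) (by omega),
        ← Finset.range_eq_Ico, Finset.sum_eq_zero h1, zero_add,
        Finset.sum_Ico_eq_sum_range]
    have h2 : ∀ t ∈ Finset.range (m0+1-i),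
        ((-1:ℤ)^(i+t) * (m0.choose (i+t) : ℤ) * ((i+t).choose i : ℤ))
          = ((-1)^i * (m0.choose i : ℤ)) * ((-1)^t * (((m0-i).choose t : ℤ))) := by
      intro t ht
      simp only [Finset.mem_range] at ht
      have key := Nat.choose_mul (n := m0) (show i ≤ i+t by omega)
      have h3 : i + t - i = t := by omega
      rw [h3] at key
      have h5 : ((m0.choose (i+t) : ℤ)) * ((i+t).choose i : ℤ)
          = (m0.choose i : ℤ) * ((m0-i).choose t : ℤ) := by exact_mod_cast congrArg Nat.cast key
      rw [pow_add]
      linear_combination ((-1:ℤ)^i * (-1)^t) * h5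
    rw [Finset.sum_congr rfl h2, ← Finset.mul_sum]
    have h4 : m0 + 1 - i = (m0 - i) + 1 := by omega
    rw [h4, Int.alternating_sum_range_choose]
    rcases eq_or_ne m0 i with he | he
    · simp [he, Nat.sub_self]
    · rw [if_neg (by omega), if_neg he, mul_zero]

lemma alt_sum_powerset {α : Type*} [DecidableEq α] (M : Finset α) (i : ℕ) :
    ∑ S ∈ M.powerset, (-1:ℤ)^S.card * (S.card.choose i : ℤ)
      = if M.card = i then (-1)^i else 0 := by
  rw [Finset.sum_powerset_apply_card (f := fun m => (-1:ℤ)^m * (m.choose i : ℤ)),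
      ← alt_sum_choose M.card i]
  apply Finset.sum_congr rfl
  intro m _
  rw [nsmul_eq_mul]; ring

lemma card_colorings_eq (V : Type) [Fintype V] [DecidableEq V] (n : ℕ) (S : Finset (Sym2 V)) :
    (Finset.univ.filter fun σ : V → Fin n => ∀ e ∈ S, (Sym2.map σ e).IsDiag).card
      = n ^ comps V S := by
  classical
  set Gs := SimpleGraph.fromEdgeSet (↑S : Set (Sym2 V)) with hGs
  have hadj : ∀ {a b : V}, Gs.Adj a b → ∀ σ : V → Fin n,
      (∀ e ∈ S, (Sym2.map σ e).IsDiag) → σ a = σ b := by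
    intro a b hab σ hσ
    rw [hGs, SimpleGraph.fromEdgeSet_adj] at hab
    have := hσ _ (Finset.mem_coe.mp hab.1)
    rwa [Sym2.map_pair_eq, Sym2.mk_isDiag_iff] at this
  have hwalk : ∀ (σ : V → Fin n), (∀ e ∈ S, (Sym2.map σ e).IsDiag) →
      ∀ {v w : V}, Gs.Walk v w → σ v = σ w := by
    intro σ hσ v w p
    induction p with
    | nil => rfl
    | cons h q ih => exact (hadj h σ hσ).trans ih
  let E : {σ : V → Fin n // ∀ e ∈ S, (Sym2.map σ e).IsDiag} ≃ (Gs.ConnectedComponent → Fin n) :=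
    { toFun := fun σ => SimpleGraph.ConnectedComponent.lift σ.1
        (fun v w p _ => hwalk σ.1 σ.2 p)
      invFun := fun f => ⟨fun v => f (Gs.connectedComponentMk v), by
        intro e he
        induction e with
        | _ a b =>
          rw [Sym2.map_pair_eq, Sym2.mk_isDiag_iff]
          rcases eq_or_ne a b with rfl | hab
          · rfl
          · congr 1
            exact SimpleGraph.ConnectedComponent.connectedComponentMk_eq_of_adj
              (by rw [hGs, SimpleGraph.fromEdgeSet_adj]; exact ⟨Finset.mem_coe.mpr he, hab⟩)⟩
      left_inv := fun σ => rfl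
      right_inv := fun f => funext fun c => c.ind (fun v => rfl) }
  rw [← Fintype.card_subtype, ← Nat.card_eq_fintype_card, Nat.card_congr E, Nat.card_fun,
    Nat.card_eq_fintype_card, Fintype.card_fin]
  rfl

/-- The impropriety polynomials are graded Euler characteristics of the
dichromatic homology:
`C^i_G(n) = (−1)^i Σ_{j ≥ 0} (n − 1)^j χ^{i,j}(G)`,
where `χ^{i,j}(G) = Σ_{S ⊆ E(G)} (−1)^{|S|} C(|S|, i) C(c(S), j)`.
(All terms with `j > |V|` vanish, so that range suffices.) -/
theorem impropriety_eq_graded_euler_char (V : Type) [Fintype V] [DecidableEq V]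
    (G : SimpleGraph V) [DecidableRel G.Adj] (n : ℕ) (hn : 1 ≤ n) (i : ℕ) :
    (improprietyCount G n i : ℤ) =
      (-1) ^ i *
        ∑ j ∈ Finset.range (Fintype.card V + 1),
          ((n : ℤ) - 1) ^ j *
            ∑ S ∈ G.edgeFinset.powerset,
              (-1) ^ S.card * (S.card.choose i : ℤ) * ((comps V S).choose j : ℤ) := by
  classical
  -- Step 1: swap the `j`-sum inside and collapse it by the binomial theorem.
  have step1 : ∑ j ∈ Finset.range (Fintype.card V + 1),
        ((n : ℤ) - 1) ^ j *
          ∑ S ∈ G.edgeFinset.powerset,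
            (-1) ^ S.card * (S.card.choose i : ℤ) * ((comps V S).choose j : ℤ)
      = ∑ S ∈ G.edgeFinset.powerset,
          (-1) ^ S.card * (S.card.choose i : ℤ) * (n : ℤ) ^ comps V S := by
    simp_rw [Finset.mul_sum]
    rw [Finset.sum_comm]
    apply Finset.sum_congr rfl
    intro S _
    have := binom_sum_choose ((n : ℤ) - 1) (comps V S) (Fintype.card V) (comps_le_card V S)
    rw [sub_add_cancel] at this
    rw [← this, Finset.mul_sum]
    apply Finset.sum_congr rfl
    intro j _
    ring
  rw [step1]
  -- Step 2: express `n ^ comps V S` as a count of colorings.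
  have step2 : ∀ S ∈ G.edgeFinset.powerset,
      (-1:ℤ) ^ S.card * (S.card.choose i : ℤ) * (n : ℤ) ^ comps V S
        = ∑ σ : V → Fin n, (-1:ℤ) ^ S.card * (S.card.choose i : ℤ) *
            (if ∀ e ∈ S, (Sym2.map σ e).IsDiag then 1 else 0) := by
    intro S _
    rw [← Finset.mul_sum, Finset.sum_boole, card_colorings_eq V n S]
    push_cast
    ring
  rw [Finset.sum_congr rfl step2, Finset.sum_comm]
  -- Step 3: for each coloring, collapse the sum over `S`.
  have step3 : ∀ σ : V → Fin n,
      ∑ S ∈ G.edgeFinset.powerset, (-1:ℤ) ^ S.card * (S.card.choose i : ℤ) *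
          (if ∀ e ∈ S, (Sym2.map σ e).IsDiag then 1 else 0)
        = if improperEdges G σ = i then (-1:ℤ)^i else 0 := by
    intro σ
    have hps : G.edgeFinset.powerset.filter (fun S => ∀ e ∈ S, (Sym2.map σ e).IsDiag)
        = (G.edgeFinset.filter fun e => (Sym2.map σ e).IsDiag).powerset := by
      ext S
      simp only [Finset.mem_filter, Finset.mem_powerset, Finset.subset_iff, Finset.mem_filter]
      constructor
      · rintro ⟨h1, h2⟩ x hx
        exact ⟨h1 hx, h2 x hx⟩
      · intro h
        exact ⟨fun x hx => (h hx).1, fun x hx => (h hx).2⟩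
    simp only [mul_ite, mul_one, mul_zero]
    rw [← Finset.sum_filter, hps, alt_sum_powerset]
    rfl
  rw [Finset.sum_congr rfl (fun σ _ => step3 σ)]
  have hfin : ∑ σ : V → Fin n, (if improperEdges G σ = i then (-1:ℤ)^i else 0)
      = (-1:ℤ)^i * (improprietyCount G n i : ℤ) := by
    rw [improprietyCount]
    push_cast
    rw [← Finset.sum_boole, Finset.mul_sum]
    apply Finset.sum_congr rfl
    intro σ _
    split <;> ring
  rw [hfin, ← mul_assoc, ← pow_add, Even.neg_one_pow ⟨i, rfl⟩, one_mul]
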